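/- Rescaling identity: let r⃗ ⪯ p⃗, set ρ by 1/ρ = 1/r_m − 1/r_{m+1}' + Σᵢ₌₁^{m−1} 1/pᵢ, let ŵ = (∏ᵢ₌₁^{m−1} wᵢ^{1/pᵢ})^ρ, w = ∏ᵢ₌₁ᵐ wᵢ^{p/pᵢ}, and W = w^{r_m/p} ŵ^{−r_m/δ_{m+1}} where 1/δ_{m+1} = 1/r_{m+1} − 1/p'. Then for every measurable f ≥ 0: ‖f‖_{L^p(w dx)} = ‖(f ŵ^{−1/r_{m+1}'})^{r_m}‖_{L^{p/r_m}(W^{p/r_m} ŵ dx)}^{1/r_m}, and ‖f‖_{L^{p_m}(w_m dx)} = ‖(f ŵ^{−1/r_m})^{r_m}‖_{L^{p_m/r_m}(W^{p_m/r_m} ŵ dx)}^{1/r_m}. -/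

import Mathlib

open MeasureTheory ENNReal

noncomputable section

/-- Points of `ℝⁿ`. -/
abbrev Xs (n : ℕ) := Fin n → ℝ

/-- The axis-parallel cube with "lower-left" corner `c` and side length `l`. -/
def Cube {n : ℕ} (c : Xs n) (l : ℝ) : Set (Xs n) := Set.Icc c (fun i => c i + l)

/-- Average `⨍_Q f dμ` of an `ℝ≥0∞`-valued function. -/
def avg {n : ℕ} (μ : Measure (Xs n)) (Q : Set (Xs n)) (f : Xs n → ℝ≥0∞) : ℝ≥0∞ :=
  (μ Q)⁻¹ * ∫⁻ x in Q, f x ∂μ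

/-- The Muckenhoupt `A_q(μ)` constant of a weight `v` (with the `A₁` convention
using the essential supremum when `q = 1`). -/
def AConst {n : ℕ} (μ : Measure (Xs n)) (v : Xs n → ℝ≥0∞) (q : ℝ) : ℝ≥0∞ :=
  ⨆ (c : Xs n) (l : ℝ) (_ : 0 < l),
    avg μ (Cube c l) v *
      (if q = 1 then essSup (fun x => (v x)⁻¹) (μ.restrict (Cube c l))
       else (avg μ (Cube c l) (fun x => v x ^ (-(q - 1)⁻¹))) ^ (q - 1))

lemma aux_rpow_ne_zero {x : ℝ≥0∞} (h0 : x ≠ 0) (ht : x ≠ ⊤) (y : ℝ) : x ^ y ≠ 0 := by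
  simp [ENNReal.rpow_eq_zero_iff, h0, ht]

lemma aux_rpow_ne_top {x : ℝ≥0∞} (h0 : x ≠ 0) (ht : x ≠ ⊤) (y : ℝ) : x ^ y ≠ ⊤ := by
  simp [ENNReal.rpow_eq_top_iff, h0, ht]

lemma aux_key (f b c : ℝ≥0∞) (hb0 : b ≠ 0) (hbt : b ≠ ⊤)
    (u A B q rm : ℝ) (hq : 0 ≤ q) (hrm : 0 ≤ rm) :
    ((f * b ^ u) ^ rm) ^ q * ((c ^ A * b ^ B) ^ q * b)
      = f ^ (rm * q) * b ^ (u * (rm * q) + B * q + 1) * c ^ (A * q) := by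
  rw [← ENNReal.rpow_mul, ENNReal.mul_rpow_of_nonneg _ _ (mul_nonneg hrm hq),
    ← ENNReal.rpow_mul, ENNReal.mul_rpow_of_nonneg _ _ hq, ← ENNReal.rpow_mul,
    ← ENNReal.rpow_mul, ENNReal.rpow_add _ _ hb0 hbt, ENNReal.rpow_add _ _ hb0 hbt,
    ENNReal.rpow_one]
  ring

lemma aux_key1 (f b c : ℝ≥0∞) (hb0 : b ≠ 0) (hbt : b ≠ ⊤)
    (u A B q rm P : ℝ) (hq : 0 ≤ q) (hrm : 0 ≤ rm)
    (hP : rm * q = P) (hbE : u * P + B * q + 1 = 0) (hA : A * q = 1) :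
    ((f * b ^ u) ^ rm) ^ q * ((c ^ A * b ^ B) ^ q * b) = f ^ P * c := by
  rw [aux_key f b c hb0 hbt u A B q rm hq hrm, hP, hbE, ENNReal.rpow_zero, mul_one,
    hA, ENNReal.rpow_one]

lemma aux_key2 (f b c wm : ℝ≥0∞) (hb0 : b ≠ 0) (hbt : b ≠ ⊤)
    (u A B q rm s t P : ℝ) (hq : 0 ≤ q) (hrm : 0 ≤ rm) (hAq : 0 ≤ A * q)
    (hc : c = b ^ s * wm ^ t)
    (hP : rm * q = P) (hbE : (u * P + B * q + 1) + s * (A * q) = 0)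
    (htE : t * (A * q) = 1) :
    ((f * b ^ u) ^ rm) ^ q * ((c ^ A * b ^ B) ^ q * b) = f ^ P * wm := by
  rw [aux_key f b c hb0 hbt u A B q rm hq hrm, hP, hc,
    ENNReal.mul_rpow_of_nonneg _ _ hAq, ← ENNReal.rpow_mul, ← ENNReal.rpow_mul,
    htE, ENNReal.rpow_one]
  calc f ^ P * b ^ (u * P + B * q + 1) * (b ^ (s * (A * q)) * wm)
      = f ^ P * (b ^ (u * P + B * q + 1) * b ^ (s * (A * q))) * wm := by ring
    _ = f ^ P * wm := by
        rw [← ENNReal.rpow_add _ _ hb0 hbt, hbE, ENNReal.rpow_zero, mul_one]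

/-- Rescaling identity: with `ŵ = (∏_{i=1}^{m} w_i^{1/p_i})^ρ`,
`w = ∏ w_i^{p/p_i}` and `W = w^{r_{m+1}/p} ŵ^{-r_{m+1}/δ_{m+2}}` (the tuple has
`m+1` entries, the last index playing the role of the paper's `m`),
`‖f‖_{L^p(w dx)}` and `‖f‖_{L^{p_m}(w_m dx)}` can be rewritten as weighted norms
with respect to the measure `ŵ dx`. -/
theorem statement10 {n m : ℕ} (hm : 1 ≤ m)
    (p r : Fin (m + 1) → ℝ) (rlast : ℝ)
    (hp : ∀ i, 1 ≤ p i) (hr : ∀ i, 1 ≤ r i) (hrp : ∀ i, r i ≤ p i)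
    (hrlast : 1 ≤ rlast)
    (hscal : 1 - rlast⁻¹ < ∑ i, (p i)⁻¹)
    (w : Fin (m + 1) → Xs n → ℝ≥0∞)
    (hw : ∀ i, ∀ᵐ x ∂(volume : Measure (Xs n)), 0 < w i x ∧ w i x < ⊤)
    (f : Xs n → ℝ≥0∞) :
    let pm : ℝ := p (Fin.last m)
    let rm : ℝ := r (Fin.last m)
    let pinv : ℝ := ∑ i, (p i)⁻¹
    let rho : ℝ := (rm⁻¹ - (1 - rlast⁻¹) + ∑ i : Fin m, (p i.castSucc)⁻¹)⁻¹
    let what : Xs n → ℝ≥0∞ :=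
      fun x => (∏ i : Fin m, w i.castSucc x ^ (p i.castSucc)⁻¹) ^ rho
    let wprod : Xs n → ℝ≥0∞ := fun x => ∏ i, w i x ^ (pinv⁻¹ / p i)
    let dinv : ℝ := rlast⁻¹ - (1 - pinv)
    let W : Xs n → ℝ≥0∞ :=
      fun x => wprod x ^ (rm * pinv) * what x ^ (-(rm * dinv))
    ((∫⁻ x, f x ^ pinv⁻¹ * wprod x) ^ pinv =
      ((∫⁻ x, ((f x * what x ^ (-(1 - rlast⁻¹))) ^ rm) ^ (pinv⁻¹ / rm) *
          (W x ^ (pinv⁻¹ / rm) * what x)) ^ (pinv⁻¹ / rm)⁻¹) ^ rm⁻¹) ∧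
    ((∫⁻ x, f x ^ pm * w (Fin.last m) x) ^ pm⁻¹ =
      ((∫⁻ x, ((f x * what x ^ (-rm⁻¹)) ^ rm) ^ (pm / rm) *
          (W x ^ (pm / rm) * what x)) ^ (pm / rm)⁻¹) ^ rm⁻¹) := by
  intro pm rm pinv rho what wprod dinv W
  have hp0 : ∀ i, 0 < p i := fun i => lt_of_lt_of_le one_pos (hp i)
  have hpm : 0 < pm := hp0 _
  have hrm : 0 < rm := lt_of_lt_of_le one_pos (hr _)
  have hpinv : 0 < pinv :=
    Finset.sum_pos (fun i _ => inv_pos.mpr (hp0 i)) Finset.univ_nonempty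
  have hsum : pinv = (∑ i : Fin m, (p i.castSucc)⁻¹) + pm⁻¹ :=
    Fin.sum_univ_castSucc (fun i => (p i)⁻¹)
  have hscal' : 1 - rlast⁻¹ < pinv := hscal
  have hdinv : 0 < dinv := by simp only [dinv]; linarith
  have hrmpm : pm⁻¹ ≤ rm⁻¹ := by
    apply inv_anti₀ hrm (hrp _)
  have hEeq : rm⁻¹ - (1 - rlast⁻¹) + (∑ i : Fin m, (p i.castSucc)⁻¹)
      = rm⁻¹ + dinv - pm⁻¹ := by simp only [dinv]; linarith
  have hEpos : 0 < rm⁻¹ - (1 - rlast⁻¹) + (∑ i : Fin m, (p i.castSucc)⁻¹) := by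
    rw [hEeq]; linarith
  have hrho : 0 < rho := inv_pos.mpr hEpos
  have hrhoinv : rho⁻¹ = rm⁻¹ + dinv - pm⁻¹ := by
    simp only [rho, inv_inv]; exact hEeq
  have hae : ∀ᵐ x ∂(volume : Measure (Xs n)), ∀ i, 0 < w i x ∧ w i x < ⊤ :=
    ae_all_iff.mpr hw
  constructor
  · -- part 1
    have hI1 : (∫⁻ x, ((f x * what x ^ (-(1 - rlast⁻¹))) ^ rm) ^ (pinv⁻¹ / rm) *
          (W x ^ (pinv⁻¹ / rm) * what x)) = ∫⁻ x, f x ^ pinv⁻¹ * wprod x := by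
      refine lintegral_congr_ae ?_
      filter_upwards [hae] with x hx
      have hP0 : (∏ i : Fin m, w i.castSucc x ^ (p i.castSucc)⁻¹) ≠ 0 :=
        Finset.prod_ne_zero_iff.mpr fun i _ =>
          aux_rpow_ne_zero (hx i.castSucc).1.ne' (hx i.castSucc).2.ne _
      have hPt : (∏ i : Fin m, w i.castSucc x ^ (p i.castSucc)⁻¹) ≠ ⊤ :=
        ENNReal.prod_ne_top fun i _ =>
          aux_rpow_ne_top (hx i.castSucc).1.ne' (hx i.castSucc).2.ne _
      have hb0 : what x ≠ 0 := aux_rpow_ne_zero hP0 hPt rho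
      have hbt : what x ≠ ⊤ := aux_rpow_ne_top hP0 hPt rho
      have hP : rm * (pinv⁻¹ / rm) = pinv⁻¹ := by field_simp
      have hA : rm * pinv * (pinv⁻¹ / rm) = 1 := by field_simp
      have hbE : (-(1 - rlast⁻¹)) * pinv⁻¹ + (-(rm * dinv)) * (pinv⁻¹ / rm) + 1 = 0 := by
        simp only [dinv]; field_simp; ring
      simp only [W]
      exact aux_key1 (f x) (what x) (wprod x) hb0 hbt (-(1 - rlast⁻¹)) (rm * pinv)
        (-(rm * dinv)) (pinv⁻¹ / rm) rm pinv⁻¹ (by positivity) hrm.le hP hbE hA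
    rw [hI1, ← ENNReal.rpow_mul]
    congr 1
    field_simp
  · -- part 2
    have hI2 : (∫⁻ x, ((f x * what x ^ (-rm⁻¹)) ^ rm) ^ (pm / rm) *
          (W x ^ (pm / rm) * what x)) = ∫⁻ x, f x ^ pm * w (Fin.last m) x := by
      refine lintegral_congr_ae ?_
      filter_upwards [hae] with x hx
      have hP0 : (∏ i : Fin m, w i.castSucc x ^ (p i.castSucc)⁻¹) ≠ 0 :=
        Finset.prod_ne_zero_iff.mpr fun i _ =>
          aux_rpow_ne_zero (hx i.castSucc).1.ne' (hx i.castSucc).2.ne _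
      have hPt : (∏ i : Fin m, w i.castSucc x ^ (p i.castSucc)⁻¹) ≠ ⊤ :=
        ENNReal.prod_ne_top fun i _ =>
          aux_rpow_ne_top (hx i.castSucc).1.ne' (hx i.castSucc).2.ne _
      have hb0 : what x ≠ 0 := aux_rpow_ne_zero hP0 hPt rho
      have hbt : what x ≠ ⊤ := aux_rpow_ne_top hP0 hPt rho
      have hcb : wprod x
          = what x ^ (rho⁻¹ * pinv⁻¹) * (w (Fin.last m) x) ^ (pinv⁻¹ / pm) := by
        have h1 : ∀ i : Fin m, (w i.castSucc x) ^ (pinv⁻¹ / p i.castSucc)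
            = ((w i.castSucc x) ^ (p i.castSucc)⁻¹) ^ pinv⁻¹ := by
          intro i
          rw [← ENNReal.rpow_mul]
          congr 1
          rw [div_eq_mul_inv]; ring
        calc wprod x = ∏ i : Fin (m+1), w i x ^ (pinv⁻¹ / p i) := rfl
          _ = (∏ i : Fin m, w i.castSucc x ^ (pinv⁻¹ / p i.castSucc)) *
              (w (Fin.last m) x) ^ (pinv⁻¹ / pm) := Fin.prod_univ_castSucc _
          _ = ((∏ i : Fin m, w i.castSucc x ^ (p i.castSucc)⁻¹) ^ pinv⁻¹) *
              (w (Fin.last m) x) ^ (pinv⁻¹ / pm) := by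
            rw [Finset.prod_congr rfl (fun i _ => h1 i),
              ENNReal.prod_rpow_of_nonneg (le_of_lt (inv_pos.mpr hpinv))]
          _ = what x ^ (rho⁻¹ * pinv⁻¹) * (w (Fin.last m) x) ^ (pinv⁻¹ / pm) := by
            congr 1
            show _ = ((∏ i : Fin m, w i.castSucc x ^ (p i.castSucc)⁻¹) ^ rho) ^ (rho⁻¹ * pinv⁻¹)
            rw [← ENNReal.rpow_mul]
            congr 1
            field_simp
      have hP : rm * (pm / rm) = pm := by field_simp
      have hAq : (0:ℝ) ≤ rm * pinv * (pm / rm) := by positivity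
      have htE : (pinv⁻¹ / pm) * (rm * pinv * (pm / rm)) = 1 := by field_simp
      have hbE : ((-rm⁻¹) * pm + (-(rm * dinv)) * (pm / rm) + 1)
          + (rho⁻¹ * pinv⁻¹) * (rm * pinv * (pm / rm)) = 0 := by
        rw [hrhoinv]; field_simp; ring
      simp only [W]
      exact aux_key2 (f x) (what x) (wprod x) (w (Fin.last m) x) hb0 hbt (-rm⁻¹)
        (rm * pinv) (-(rm * dinv)) (pm / rm) rm (rho⁻¹ * pinv⁻¹) (pinv⁻¹ / pm) pm
        (by positivity) hrm.le hAq hcb hP hbE htE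
    rw [hI2, ← ENNReal.rpow_mul]
    congr 1
    field_simp
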